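/- arXiv:0907.1722 — 2 statements merged into one kernel-verified Lean document; each statement's English description precedes it below -/
import Mathlib

section
/- Let (E, sim, ser, inl) be a g-comtrace alphabet. For every step sequence v there exists a step sequence u in GMC-form with u ≡ v. -/
variable {E : Type*}

/-- A step over a comtrace alphabet `(E, sim, ser)`: a nonempty finite set of events,
pairwise related by `sim`. -/
def IsStep [DecidableEq E] (sim : E → E → Prop) (A : Finset E) : Prop :=
  A.Nonempty ∧ ∀ a ∈ A, ∀ b ∈ A, a ≠ b → sim a b

/-- A step sequence: a finite list of steps. -/
def IsStepSeq [DecidableEq E] (sim : E → E → Prop) (u : List (Finset E)) : Prop :=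
  ∀ A ∈ u, IsStep sim A

/-- The generating relation of comtrace congruence:
`w·A·z ≈ w·B·C·z` whenever `A`, `B`, `C` are steps with `B ∪ C = A` and `B × C ⊆ ser`. -/
def CTBase [DecidableEq E] (sim ser : E → E → Prop) (u v : List (Finset E)) : Prop :=
  ∃ (w z : List (Finset E)) (A B C : Finset E),
    IsStepSeq sim w ∧ IsStepSeq sim z ∧
    IsStep sim A ∧ IsStep sim B ∧ IsStep sim C ∧
    B ∪ C = A ∧ (∀ b ∈ B, ∀ c ∈ C, ser b c) ∧
    u = w ++ A :: z ∧ v = w ++ B :: C :: z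

/-- The least equivalence relation containing `base`. -/
def LeastEquiv {α : Type*} (base : α → α → Prop) (x y : α) : Prop :=
  ∀ c : α → α → Prop, Equivalence c → (∀ a b, base a b → c a b) → c x y

/-- Comtrace congruence: the least equivalence relation containing `CTBase`. -/
def CTEquiv [DecidableEq E] (sim ser : E → E → Prop) :
    List (Finset E) → List (Finset E) → Prop :=
  LeastEquiv (CTBase sim ser)

/-- The generating relation of g-comtrace congruence: the comtrace rule together with
the interleaving swap `w·A·B·z ≈ w·B·A·z` whenever `A × B ⊆ inl`. -/
def GCTBase [DecidableEq E] (sim ser inl : E → E → Prop)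
    (u v : List (Finset E)) : Prop :=
  CTBase sim ser u v ∨
  ∃ (w z : List (Finset E)) (A B : Finset E),
    IsStepSeq sim w ∧ IsStepSeq sim z ∧ IsStep sim A ∧ IsStep sim B ∧
    (∀ a ∈ A, ∀ b ∈ B, inl a b) ∧
    u = w ++ A :: B :: z ∧ v = w ++ B :: A :: z

/-- g-Comtrace congruence: the least equivalence relation containing `GCTBase`. -/
def GCTEquiv [DecidableEq E] (sim ser inl : E → E → Prop) :
    List (Finset E) → List (Finset E) → Prop :=
  LeastEquiv (GCTBase sim ser inl)

/-- Greedy maximally concurrent form over a g-comtrace alphabet. -/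
def GMCForm [DecidableEq E] (sim ser inl : E → E → Prop)
    (u : List (Finset E)) : Prop :=
  ∀ i : Fin u.length, ∀ (B : Finset E) (y : List (Finset E)),
    IsStep sim B → IsStepSeq sim y →
    GCTEquiv sim ser inl (B :: y) (u.drop (i : ℕ)) → B.card ≤ (u.get i).card

-- auxiliary lemmas
lemma gct_equivalence [DecidableEq E] (sim ser inl : E → E → Prop) :
    Equivalence (GCTEquiv sim ser inl) := by
  constructor
  · intro x c hc _; exact hc.refl x
  · intro x y h c hc hb; exact hc.symm (h c hc hb)
  · intro x y z h1 h2 c hc hb; exact hc.trans (h1 c hc hb) (h2 c hc hb)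

lemma isStepSeq_cons [DecidableEq E] {sim : E → E → Prop} {D : Finset E}
    {w : List (Finset E)} (hD : IsStep sim D) (hw : IsStepSeq sim w) :
    IsStepSeq sim (D :: w) := by
  intro X hX
  rcases List.mem_cons.mp hX with rfl | h
  · exact hD
  · exact hw X h

lemma gct_weight [DecidableEq E] {sim ser inl : E → E → Prop}
    (hsim_irr : ∀ a, ¬ sim a a) (hser_sub : ∀ a b, ser a b → sim a b)
    {u v : List (Finset E)} (h : GCTEquiv sim ser inl u v) :
    (u.map Finset.card).sum = (v.map Finset.card).sum := by
  refine h (fun a b => (a.map Finset.card).sum = (b.map Finset.card).sum)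
    ⟨fun _ => rfl, Eq.symm, Eq.trans⟩ ?_
  rintro a b (⟨w, z, A, B, C, _, _, _, _, _, hBC, hser, rfl, rfl⟩ |
    ⟨w, z, A, B, _, _, _, _, _, rfl, rfl⟩)
  · have hdisjBC : Disjoint B C := by
      rw [Finset.disjoint_left]
      intro x hxB hxC
      exact hsim_irr x (hser_sub x x (hser x hxB x hxC))
    have : A.card = B.card + C.card := by
      rw [← hBC, Finset.card_union_of_disjoint hdisjBC]
    simp [List.map_append, List.sum_append, this]
    omega
  · simp [List.map_append, List.sum_append]
    omega

lemma gct_cons [DecidableEq E] {sim ser inl : E → E → Prop} {D : Finset E}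
    (hD : IsStep sim D) {u v : List (Finset E)}
    (h : GCTEquiv sim ser inl u v) :
    GCTEquiv sim ser inl (D :: u) (D :: v) := by
  intro c hc hb
  refine h (fun a b => c (D :: a) (D :: b))
    ⟨fun a => hc.refl _, fun h => hc.symm h, fun h1 h2 => hc.trans h1 h2⟩ ?_
  rintro a b (⟨w, z, A, B, C, hw, hz, hA, hB, hC, hBC, hser, rfl, rfl⟩ |
    ⟨w, z, A, B, hw, hz, hA, hB, hinl, rfl, rfl⟩)
  · exact hb _ _ (Or.inl ⟨D :: w, z, A, B, C, isStepSeq_cons hD hw, hz,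
      hA, hB, hC, hBC, hser, rfl, rfl⟩)
  · exact hb _ _ (Or.inr ⟨D :: w, z, A, B, isStepSeq_cons hD hw, hz,
      hA, hB, hinl, rfl, rfl⟩)

/-- Every step sequence over a g-comtrace alphabet is congruent to a step sequence in
GMC-form. -/
theorem stmt11 [DecidableEq E] [Fintype E] (sim ser inl : E → E → Prop)
    (hsim_irr : ∀ a, ¬ sim a a) (hsim_symm : ∀ a b, sim a b → sim b a)
    (hinl_irr : ∀ a, ¬ inl a a) (hinl_symm : ∀ a b, inl a b → inl b a)
    (hser_sub : ∀ a b, ser a b → sim a b)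
    (hdisj : ∀ a b, ¬ (sim a b ∧ inl a b))
    (v : List (Finset E)) (hv : IsStepSeq sim v) :
    ∃ u : List (Finset E),
      IsStepSeq sim u ∧ GMCForm sim ser inl u ∧ GCTEquiv sim ser inl u v := by
  classical
  have hequiv := gct_equivalence (E := E) sim ser inl
  suffices h : ∀ n (v : List (Finset E)), (v.map Finset.card).sum = n →
      IsStepSeq sim v → ∃ u : List (Finset E),
      IsStepSeq sim u ∧ GMCForm sim ser inl u ∧ GCTEquiv sim ser inl u v by
    exact h _ v rfl hv
  intro n
  induction n using Nat.strong_induction_on with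
  | _ n ih =>
    intro v hn hv
    cases v with
    | nil =>
      refine ⟨[], fun A h => absurd h List.not_mem_nil, ?_, hequiv.refl []⟩
      intro i
      exact absurd i.isLt (by simp)
    | cons A v' =>
      -- pick a first step of maximal cardinality among decompositions ≡ v
      set P : ℕ → Prop := fun m => ∃ (B : Finset E) (y : List (Finset E)),
        IsStep sim B ∧ IsStepSeq sim y ∧
        GCTEquiv sim ser inl (B :: y) (A :: v') ∧ B.card = m with hP
      have hAstep : IsStep sim A := hv A List.mem_cons_self
      have hv' : IsStepSeq sim v' := fun X hX => hv X (List.mem_cons_of_mem _ hX)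
      set T : Finset ℕ := (Finset.range (Fintype.card E + 1)).filter P with hT
      have hmemT : ∀ m, P m → m ∈ T := by
        intro m hm
        rcases hm with ⟨B, y, hB, hy, heq, hcard⟩
        refine Finset.mem_filter.mpr ⟨Finset.mem_range.mpr ?_, ⟨B, y, hB, hy, heq, hcard⟩⟩
        have := Finset.card_le_univ B
        omega
      have hTne : T.Nonempty :=
        ⟨A.card, hmemT _ ⟨A, v', hAstep, hv', hequiv.refl _, rfl⟩⟩
      obtain ⟨B, y, hB, hy, heq, hcard⟩ :
          P (T.max' hTne) := (Finset.mem_filter.mp (T.max'_mem hTne)).2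
      have hmax : ∀ (C : Finset E) (y' : List (Finset E)), IsStep sim C →
          IsStepSeq sim y' → GCTEquiv sim ser inl (C :: y') (A :: v') →
          C.card ≤ B.card := by
        intro C y' hC hy' hce
        rw [hcard]
        exact T.le_max' _ (hmemT _ ⟨C, y', hC, hy', hce, rfl⟩)
      -- weight bookkeeping
      have hw : B.card + (y.map Finset.card).sum = n := by
        have h1 := gct_weight hsim_irr hser_sub heq
        simp only [List.map_cons, List.sum_cons] at h1 hn
        omega
      have hBpos : 1 ≤ B.card := Finset.card_pos.mpr hB.1
      obtain ⟨u', hu'seq, hu'gmc, hu'eq⟩ :=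
        ih ((y.map Finset.card).sum) (by omega) y rfl hy
      refine ⟨B :: u', isStepSeq_cons hB hu'seq, ?_,
        hequiv.trans (gct_cons hB hu'eq) heq⟩
      rintro ⟨i, hi⟩ C y' hC hy' hce
      cases i with
      | zero =>
        simp only [List.drop_zero] at hce
        have : GCTEquiv sim ser inl (C :: y') (A :: v') :=
          hequiv.trans hce (hequiv.trans (gct_cons hB hu'eq) heq)
        simpa using hmax C y' hC hy' this
      | succ j =>
        have hj : j < u'.length := by
          simpa using hi
        have := hu'gmc ⟨j, hj⟩ C y' hC hy' (by simpa using hce)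
        simpa using this
end

section
/- Let (E, sim, ser, inl) be a g-comtrace alphabet. For every step sequence v there exists a maximally concurrent step sequence u with u ≡ v. -/
variable {E : Type*}

/-- `X_j` is maximally concurrent in `x` (0-indexed): every step sequence `B·y`
g-congruent to the suffix `x.drop j` satisfies `|B| ≤ |X_j|`. -/
def MaxConcAt [DecidableEq E] (sim ser inl : E → E → Prop) (x : List (Finset E))
    (j : ℕ) : Prop :=
  ∃ h : j < x.length, ∀ (B : Finset E) (y : List (Finset E)),
    IsStep sim B → IsStepSeq sim y → GCTEquiv sim ser inl (B :: y) (x.drop j) →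
    B.card ≤ (x.get ⟨j, h⟩).card

/-- `mcIdx x` is the smallest index `j` such that the `j`-th step is maximally
concurrent in `x`. -/
noncomputable def mcIdx [DecidableEq E] (sim ser inl : E → E → Prop)
    (x : List (Finset E)) : ℕ :=
  sInf {j | MaxConcAt sim ser inl x j}

/-- A step sequence `u` is maximally concurrent iff (1) it has minimal length in its
congruence class, and (2) each suffix of `u` has minimal `mcIdx` among congruent step
sequences of the same length. -/
def MaximallyConcurrent [DecidableEq E] (sim ser inl : E → E → Prop)
    (u : List (Finset E)) : Prop :=
  (∀ v, IsStepSeq sim v → GCTEquiv sim ser inl u v → u.length ≤ v.length) ∧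
  (∀ i < u.length, ∀ w, IsStepSeq sim w → GCTEquiv sim ser inl (u.drop i) w →
    (u.drop i).length = w.length →
    mcIdx sim ser inl (u.drop i) ≤ mcIdx sim ser inl w)

section Aux

variable [DecidableEq E] (sim ser inl : E → E → Prop)

theorem gct_refl (x : List (Finset E)) : GCTEquiv sim ser inl x x :=
  fun _ hc _ => hc.refl x

theorem gct_symm {x y : List (Finset E)} (h : GCTEquiv sim ser inl x y) :
    GCTEquiv sim ser inl y x :=
  fun c hc hb => hc.symm (h c hc hb)

theorem gct_trans {x y z : List (Finset E)} (h1 : GCTEquiv sim ser inl x y)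
    (h2 : GCTEquiv sim ser inl y z) : GCTEquiv sim ser inl x z :=
  fun c hc hb => hc.trans (h1 c hc hb) (h2 c hc hb)

theorem gct_of_base {x y : List (Finset E)} (h : GCTBase sim ser inl x y) :
    GCTEquiv sim ser inl x y :=
  fun _ _ hb => hb _ _ h

theorem stepseq_cons {A : Finset E} {w : List (Finset E)} (hA : IsStep sim A)
    (hw : IsStepSeq sim w) : IsStepSeq sim (A :: w) := by
  intro X hX
  rcases List.mem_cons.1 hX with rfl | h
  · exact hA
  · exact hw X h

theorem gctbase_cons {A : Finset E} {u w : List (Finset E)} (hA : IsStep sim A)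
    (h : GCTBase sim ser inl u w) : GCTBase sim ser inl (A :: u) (A :: w) := by
  rcases h with ⟨w0, z, A', B, C, hw0, hz, hA', hB, hC, hun, hs, rfl, rfl⟩ |
    ⟨w0, z, A', B', hw0, hz, hA', hB', hinl, rfl, rfl⟩
  · exact Or.inl ⟨A :: w0, z, A', B, C, stepseq_cons sim hA hw0, hz, hA', hB, hC, hun, hs,
      rfl, rfl⟩
  · exact Or.inr ⟨A :: w0, z, A', B', stepseq_cons sim hA hw0, hz, hA', hB', hinl, rfl, rfl⟩

theorem gct_cons_s12 {A : Finset E} {y y' : List (Finset E)} (hA : IsStep sim A)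
    (h : GCTEquiv sim ser inl y y') : GCTEquiv sim ser inl (A :: y) (A :: y') := by
  refine h (fun a b => GCTEquiv sim ser inl (A :: a) (A :: b))
    ⟨fun x => gct_refl sim ser inl _, fun h => gct_symm sim ser inl h,
      fun h1 h2 => gct_trans sim ser inl h1 h2⟩
    (fun a b hb => gct_of_base sim ser inl (gctbase_cons sim ser inl hA hb))

theorem gct_sum (hser_sub : ∀ a b, ser a b → sim a b) (hsim_irr : ∀ a, ¬ sim a a)
    {x y : List (Finset E)} (h : GCTEquiv sim ser inl x y) :
    (x.map Finset.card).sum = (y.map Finset.card).sum := by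
  refine h (fun a b => (a.map Finset.card).sum = (b.map Finset.card).sum)
    ⟨fun _ => rfl, Eq.symm, Eq.trans⟩ ?_
  rintro a b (⟨w0, z, A, B, C, _, _, _, _, _, hun, hs, rfl, rfl⟩ |
    ⟨w0, z, A, B, _, _, _, _, _, rfl, rfl⟩)
  · have hd : Disjoint B C := by
      rw [Finset.disjoint_left]
      intro a haB haC
      exact hsim_irr a (hser_sub a a (hs a haB a haC))
    have hc : A.card = B.card + C.card := by
      rw [← hun, Finset.card_union_of_disjoint hd]
    simp only [List.map_append, List.sum_append, List.map_cons, List.sum_cons, hc]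
    omega
  · simp only [List.map_append, List.sum_append, List.map_cons, List.sum_cons]
    omega

theorem maxConcAt_succ {A : Finset E} {y : List (Finset E)} {k : ℕ} :
    MaxConcAt sim ser inl (A :: y) (k + 1) ↔ MaxConcAt sim ser inl y k := by
  constructor
  · rintro ⟨h, H⟩
    refine ⟨by simpa [Nat.succ_lt_succ_iff] using h, fun B z hB hz he => ?_⟩
    have := H B z hB hz (by simpa using he)
    simpa using this
  · rintro ⟨h, H⟩
    refine ⟨by simpa [Nat.succ_lt_succ_iff] using h, fun B z hB hz he => ?_⟩
    have := H B z hB hz (by simpa using he)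
    simpa using this

theorem maxConcAt_zero_congr {A : Finset E} {y y' : List (Finset E)} (hA : IsStep sim A)
    (h : GCTEquiv sim ser inl y y') :
    MaxConcAt sim ser inl (A :: y) 0 ↔ MaxConcAt sim ser inl (A :: y') 0 := by
  constructor
  · rintro ⟨hl, H⟩
    refine ⟨by simp, fun B z hB hz he => ?_⟩
    have := H B z hB hz (by
      simp only [List.drop_zero] at he ⊢
      exact gct_trans sim ser inl he (gct_cons_s12 sim ser inl hA (gct_symm sim ser inl h)))
    simpa using this
  · rintro ⟨hl, H⟩
    refine ⟨by simp, fun B z hB hz he => ?_⟩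
    have := H B z hB hz (by
      simp only [List.drop_zero] at he ⊢
      exact gct_trans sim ser inl he (gct_cons_s12 sim ser inl hA h))
    simpa using this

theorem maxConcAt_last (hser_sub : ∀ a b, ser a b → sim a b) (hsim_irr : ∀ a, ¬ sim a a)
    {x : List (Finset E)} (hx : x ≠ []) :
    MaxConcAt sim ser inl x (x.length - 1) := by
  have hlen : 0 < x.length := List.length_pos_iff.mpr hx
  have hlt : x.length - 1 < x.length := by omega
  refine ⟨hlt, fun B z hB hz he => ?_⟩
  have hdrop : x.drop (x.length - 1) = [x.get ⟨x.length - 1, hlt⟩] := by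
    rw [List.drop_eq_getElem_cons hlt]
    have : x.length - 1 + 1 = x.length := by omega
    rw [this, List.drop_length]
    simp [List.get_eq_getElem]
  have hsum := gct_sum sim ser inl hser_sub hsim_irr he
  rw [hdrop] at hsum
  simp only [List.map_cons, List.sum_cons, List.map_nil, List.sum_nil] at hsum
  omega

theorem mcIdx_zero {x : List (Finset E)} (h : MaxConcAt sim ser inl x 0) :
    mcIdx sim ser inl x = 0 :=
  Nat.eq_zero_of_le_zero (Nat.sInf_le h)

theorem mcIdx_cons (hser_sub : ∀ a b, ser a b → sim a b) (hsim_irr : ∀ a, ¬ sim a a)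
    {A : Finset E} {y : List (Finset E)} (hy : y ≠ [])
    (h0 : ¬ MaxConcAt sim ser inl (A :: y) 0) :
    mcIdx sim ser inl (A :: y) = mcIdx sim ser inl y + 1 := by
  have hSyne : {j | MaxConcAt sim ser inl y j}.Nonempty :=
    ⟨y.length - 1, maxConcAt_last sim ser inl hser_sub hsim_irr hy⟩
  have hm : MaxConcAt sim ser inl y (mcIdx sim ser inl y) := Nat.sInf_mem hSyne
  have h1 : MaxConcAt sim ser inl (A :: y) (mcIdx sim ser inl y + 1) :=
    (maxConcAt_succ sim ser inl).mpr hm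
  refine le_antisymm (Nat.sInf_le h1) ?_
  have hSne : {j | MaxConcAt sim ser inl (A :: y) j}.Nonempty := ⟨_, h1⟩
  have hmem : MaxConcAt sim ser inl (A :: y) (sInf {j | MaxConcAt sim ser inl (A :: y) j}) :=
    Nat.sInf_mem hSne
  rcases Nat.eq_zero_or_pos (sInf {j | MaxConcAt sim ser inl (A :: y) j}) with h | h
  · rw [h] at hmem
    exact absurd hmem h0
  · obtain ⟨k, hk⟩ : ∃ k, sInf {j | MaxConcAt sim ser inl (A :: y) j} = k + 1 :=
      ⟨sInf {j | MaxConcAt sim ser inl (A :: y) j} - 1, by omega⟩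
    rw [hk] at hmem
    have hky : MaxConcAt sim ser inl y k := (maxConcAt_succ sim ser inl).mp hmem
    have hle : mcIdx sim ser inl y ≤ k := Nat.sInf_le hky
    show mcIdx sim ser inl y + 1 ≤ sInf {j | MaxConcAt sim ser inl (A :: y) j}
    omega

/-- The key recursive property: each suffix has minimal `mcIdx` among congruent
step sequences of the same length. -/
def QProp [DecidableEq E] (sim ser inl : E → E → Prop) (u : List (Finset E)) : Prop :=
  ∀ i, ∀ w, IsStepSeq sim w → GCTEquiv sim ser inl (u.drop i) w →
    (u.drop i).length = w.length →
    mcIdx sim ser inl (u.drop i) ≤ mcIdx sim ser inl w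

theorem exists_Q (hser_sub : ∀ a b, ser a b → sim a b) (hsim_irr : ∀ a, ¬ sim a a) :
    ∀ n (x : List (Finset E)), IsStepSeq sim x → x.length = n →
    ∃ u, IsStepSeq sim u ∧ GCTEquiv sim ser inl u x ∧ u.length = x.length ∧
      QProp sim ser inl u := by
  intro n
  induction n with
  | zero =>
    intro x hx hlen
    have hx0 : x = [] := List.eq_nil_of_length_eq_zero hlen
    subst hx0
    refine ⟨[], (by intro A h; simp at h), gct_refl sim ser inl [], rfl, ?_⟩
    intro i w hw he hl
    simp only [List.drop_nil] at he hl ⊢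
    have : w = [] := List.eq_nil_of_length_eq_zero hl.symm
    subst this
    exact le_rfl
  | succ n ih =>
    intro x hx hlen
    set M := {m | ∃ w, IsStepSeq sim w ∧ GCTEquiv sim ser inl w x ∧ w.length = x.length ∧
      mcIdx sim ser inl w = m} with hM
    have hMne : M.Nonempty := ⟨_, x, hx, gct_refl sim ser inl x, rfl, rfl⟩
    obtain ⟨w0, hw0s, hw0e, hw0l, hw0m⟩ := Nat.sInf_mem hMne
    cases w0 with
    | nil => simp [hlen] at hw0l
    | cons A y =>
      have hA : IsStep sim A := hw0s A List.mem_cons_self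
      have hys : IsStepSeq sim y := fun X hX => hw0s X (List.mem_cons_of_mem _ hX)
      have hylen : y.length = n := by
        simp only [List.length_cons] at hw0l
        omega
      obtain ⟨y', hy's, hy'e, hy'l, hy'Q⟩ := ih y hys hylen
      have hue : GCTEquiv sim ser inl (A :: y') x :=
        gct_trans sim ser inl (gct_cons_s12 sim ser inl hA hy'e) hw0e
      have hul : (A :: y').length = x.length := by
        simp only [List.length_cons, hy'l]
        simpa using hw0l
      refine ⟨A :: y', stepseq_cons sim hA hy's, hue, hul, ?_⟩
      intro i w hw he hl
      cases i with
      | succ k =>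
        have := hy'Q k w hw (by simpa using he) (by simpa using hl)
        simpa using this
      | zero =>
        simp only [List.drop_zero] at he hl ⊢
        by_cases h0 : MaxConcAt sim ser inl (A :: y') 0
        · rw [mcIdx_zero sim ser inl h0]
          exact Nat.zero_le _
        · have hy'ne : y' ≠ [] := by
            intro hn
            subst hn
            have := maxConcAt_last sim ser inl hser_sub hsim_irr (x := [A]) (by simp)
            simp only [List.length_singleton, Nat.sub_self] at this
            exact h0 this
          have hyne : y ≠ [] := by
            intro hn
            subst hn
            simp at hy'l
            exact hy'ne hy'l
          have h0w : ¬ MaxConcAt sim ser inl (A :: y) 0 := fun hh =>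
            h0 ((maxConcAt_zero_congr sim ser inl hA
              (gct_symm sim ser inl hy'e)).mp hh)
          have e1 : mcIdx sim ser inl (A :: y') = mcIdx sim ser inl y' + 1 :=
            mcIdx_cons sim ser inl hser_sub hsim_irr hy'ne h0
          have e2 : mcIdx sim ser inl (A :: y) = mcIdx sim ser inl y + 1 :=
            mcIdx_cons sim ser inl hser_sub hsim_irr hyne h0w
          have h3 : mcIdx sim ser inl y' ≤ mcIdx sim ser inl y := by
            have := hy'Q 0 y hys (by simpa using hy'e) (by simpa using hy'l)
            simpa using this
          have hwM : mcIdx sim ser inl w ∈ M := by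
            refine ⟨w, hw, gct_trans sim ser inl (gct_symm sim ser inl he) hue, ?_, rfl⟩
            rw [← hl]
            exact hul
          have h4 : sInf M ≤ mcIdx sim ser inl w := Nat.sInf_le hwM
          omega

end Aux

/-- Every step sequence over a g-comtrace alphabet is congruent to a maximally
concurrent step sequence. -/
theorem stmt12 [DecidableEq E] [Fintype E] (sim ser inl : E → E → Prop)
    (hsim_irr : ∀ a, ¬ sim a a) (hsim_symm : ∀ a b, sim a b → sim b a)
    (hinl_irr : ∀ a, ¬ inl a a) (hinl_symm : ∀ a b, inl a b → inl b a)
    (hser_sub : ∀ a b, ser a b → sim a b)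
    (hdisj : ∀ a b, ¬ (sim a b ∧ inl a b))
    (v : List (Finset E)) (hv : IsStepSeq sim v) :
    ∃ u : List (Finset E),
      IsStepSeq sim u ∧ MaximallyConcurrent sim ser inl u ∧
        GCTEquiv sim ser inl u v := by
    classical
  set Lset := {n | ∃ w, IsStepSeq sim w ∧ GCTEquiv sim ser inl w v ∧ w.length = n}
    with hLset
  have hLne : Lset.Nonempty := ⟨v.length, v, hv, gct_refl sim ser inl v, rfl⟩
  obtain ⟨x, hxs, hxe, hxl⟩ := Nat.sInf_mem hLne
  obtain ⟨u, hus, hue, hul, huQ⟩ := exists_Q sim ser inl hser_sub hsim_irr x.length x hxs rfl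
  refine ⟨u, hus, ⟨?_, ?_⟩, gct_trans sim ser inl hue hxe⟩
  · intro w hw hew
    have hwv : GCTEquiv sim ser inl w v :=
      gct_trans sim ser inl (gct_symm sim ser inl hew)
        (gct_trans sim ser inl hue hxe)
    have : w.length ∈ Lset := ⟨w, hw, hwv, rfl⟩
    have hle := Nat.sInf_le this
    omega
  · intro i _ w hw he hl
    exact huQ i w hw he hl
end
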